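/- On the real polynomial ring ℝ[x_1,…,x_n], the Moyal–Weyl star product associated with a constant antisymmetric matrix π is a formal star product in the sense of Bayen–Flato–Fronsdal–Lichnerowicz–Sternheimer: (i) it is associative, (f ⋆ g) ⋆ h = f ⋆ (g ⋆ h); (ii) its zeroth-order term is the ordinary product, m_0(f,g) = f·g; (iii) 1 ⋆ f = f = f ⋆ 1; and (iv) the first-order term of the star commutator reproduces the constant Poisson bracket: the t-coefficient of f ⋆ g − g ⋆ f equals 2·Σ_{i,j} π^{ij} (∂f/∂x_i)(∂g/∂x_j). -/

import Mathlib

open MvPolynomial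


/-- Iterated formal partial derivative of a polynomial along a list of indices. -/
noncomputable def pdSeqP {n : ℕ} : List (Fin n) → MvPolynomial (Fin n) ℝ → MvPolynomial (Fin n) ℝ
  | [], f => f
  | i :: l, f => MvPolynomial.pderiv i (pdSeqP l f)

/-- The `k`-th Moyal–Weyl bidifferential operator on `ℝ[x_1,…,x_n]` with constant
coefficient matrix `π`:
`m_k(f,g) = (1/k!) Σ_{I,J} π^{i₁j₁}⋯π^{i_k j_k} (∂_I f)(∂_J g)`. -/
noncomputable def moyalP {n : ℕ} (π : Fin n → Fin n → ℝ) (k : ℕ)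
    (f g : MvPolynomial (Fin n) ℝ) : MvPolynomial (Fin n) ℝ :=
  MvPolynomial.C (1 / (Nat.factorial k : ℝ)) *
    ∑ I : Fin k → Fin n, ∑ J : Fin k → Fin n,
      MvPolynomial.C (∏ l : Fin k, π (I l) (J l)) *
        pdSeqP (List.ofFn I) f * pdSeqP (List.ofFn J) g

/-- The Moyal–Weyl star product `f ⋆ g = Σ_k t^k m_k(f,g)`, as a formal power
series in the deformation parameter `t` with polynomial coefficients. -/
noncomputable def starP {n : ℕ} (π : Fin n → Fin n → ℝ)
    (f g : MvPolynomial (Fin n) ℝ) : PowerSeries (MvPolynomial (Fin n) ℝ) :=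
  PowerSeries.mk fun k => moyalP π k f g

/-- On `ℝ[x_1,…,x_n]` the Moyal–Weyl star product associated with a constant
antisymmetric matrix `π` is a formal star product:
(i) it is associative (stated coefficientwise in `t`, with the star product
extended `t`-linearly, so the `t^l`-coefficient of `(f⋆g)⋆h` is
`Σ_{a+b=l} m_b(m_a(f,g),h)`);
(ii) `m_0(f,g) = f·g`;
(iii) `1 ⋆ f = f = f ⋆ 1`;
(iv) the `t`-coefficient of `f ⋆ g − g ⋆ f` is `2 Σ_{i,j} π^{ij} ∂_i f ∂_j g`. -/

theorem MW.pderiv_comm' {σ R : Type*} [CommSemiring R] [DecidableEq σ] (i j : σ)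
    (f : MvPolynomial σ R) :
    pderiv i (pderiv j f) = pderiv j (pderiv i f) := by
  induction f using MvPolynomial.induction_on' with
  | add p q hp hq => simp [hp, hq]
  | monomial s a =>
    rcases eq_or_ne i j with rfl | hij
    · rfl
    · simp only [pderiv_monomial]
      rw [tsub_tsub, tsub_tsub, add_comm]
      congr 1
      · rw [Finsupp.tsub_apply, Finsupp.tsub_apply, Finsupp.single_eq_of_ne hij,
          Finsupp.single_eq_of_ne (Ne.symm hij)]
        simp [mul_right_comm]

namespace MW

variable {n : ℕ}

/-- Polynomials in three groups of `n` variables. -/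
abbrev B (n : ℕ) : Type := MvPolynomial (Fin 3 × Fin n) ℝ

noncomputable def emb (s : Fin 3) : MvPolynomial (Fin n) ℝ →ₐ[ℝ] B n :=
  rename (fun i => (s, i))

noncomputable def ev : B n →ₐ[ℝ] MvPolynomial (Fin n) ℝ :=
  aeval (fun p => X p.2)

noncomputable def pd (s : Fin 3) (i : Fin n) : Module.End ℝ (B n) :=
  (pderiv (s, i)).toLinearMap

noncomputable def Dop (S : Finset (Fin 3)) (i : Fin n) : Module.End ℝ (B n) :=
  ∑ s ∈ S, pd s i

noncomputable def Pop (π : Fin n → Fin n → ℝ) (S T : Finset (Fin 3)) :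
    Module.End ℝ (B n) :=
  ∑ i : Fin n, ∑ j : Fin n, π i j • (Dop S i * Dop T j)

noncomputable def Wl (S : Finset (Fin 3)) : List (Fin n) → B n → B n
  | [], K => K
  | i :: l, K => Dop S i (Wl S l K)

@[simp] theorem Wl_nil (S : Finset (Fin 3)) (K : B n) : Wl S [] K = K := rfl

@[simp] theorem Wl_cons (S : Finset (Fin 3)) (i : Fin n) (l : List (Fin n)) (K : B n) :
    Wl S (i :: l) K = Dop S i (Wl S l K) := rfl

def SuppIn (S : Finset (Fin 3)) (K : B n) : Prop :=
  ∀ s, s ∉ S → ∀ i, pderiv (s, i) K = 0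

theorem pd_apply (s : Fin 3) (i : Fin n) (K : B n) : pd s i K = pderiv (s, i) K := rfl

theorem Dop_apply (S : Finset (Fin 3)) (i : Fin n) (K : B n) :
    Dop S i K = ∑ s ∈ S, pderiv (s, i) K := by
  simp [Dop, LinearMap.sum_apply, pd_apply]

theorem commute_pd (s t : Fin 3) (i j : Fin n) : Commute (pd (n := n) s i) (pd t j) := by
  apply LinearMap.ext
  intro K
  simpa [Module.End.mul_apply, pd_apply] using MW.pderiv_comm' (s, i) (t, j) K

theorem commute_pd_Pop (π : Fin n → Fin n → ℝ) (s : Fin 3) (i : Fin n)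
    (S T : Finset (Fin 3)) : Commute (pd s i) (Pop π S T) := by
  refine Commute.sum_right _ _ _ fun a _ => Commute.sum_right _ _ _ fun b _ => ?_
  refine Commute.smul_right ?_ _
  exact Commute.mul_right (Commute.sum_right _ _ _ fun t _ => commute_pd s t i a)
    (Commute.sum_right _ _ _ fun t _ => commute_pd s t i b)

theorem commute_Pop (π : Fin n → Fin n → ℝ) (S T S' T' : Finset (Fin 3)) :
    Commute (Pop π S T) (Pop π S' T') := by
  refine Commute.sum_left _ _ _ fun a _ => Commute.sum_left _ _ _ fun b _ => ?_
  refine Commute.smul_left ?_ _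
  exact Commute.mul_left (Commute.sum_left _ _ _ fun t _ => commute_pd_Pop π t a S' T')
    (Commute.sum_left _ _ _ fun t _ => commute_pd_Pop π t b S' T')

theorem pderiv_emb_self (s : Fin 3) (i : Fin n) (f : MvPolynomial (Fin n) ℝ) :
    pderiv (s, i) (emb s f) = emb s (pderiv i f) :=
  pderiv_rename (fun a b h => by simpa using congrArg Prod.snd h) i f

theorem pderiv_emb_ne {s t : Fin 3} (h : t ≠ s) (i : Fin n) (f : MvPolynomial (Fin n) ℝ) :
    pderiv (t, i) (emb s f) = 0 := by
  apply pderiv_eq_zero_of_notMem_vars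
  intro hmem
  obtain ⟨j, _, hj⟩ := mem_vars_rename _ _ hmem
  exact h (congrArg Prod.fst hj).symm

theorem suppIn_emb (s : Fin 3) (f : MvPolynomial (Fin n) ℝ) : SuppIn {s} (emb s f) := by
  intro t ht i
  exact pderiv_emb_ne (by simpa using ht) i f

theorem SuppIn.mono {S T : Finset (Fin 3)} {K : B n} (h : SuppIn S K) (hst : S ⊆ T) :
    SuppIn T K := fun s hs i => h s (fun hmem => hs (hst hmem)) i

theorem SuppIn.mul {S T : Finset (Fin 3)} {K L : B n} (hK : SuppIn S K) (hL : SuppIn T L) :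
    SuppIn (S ∪ T) (K * L) := by
  intro s hs i
  simp only [Finset.mem_union, not_or] at hs
  rw [pderiv_mul, hK s hs.1 i, hL s hs.2 i, zero_mul, mul_zero, add_zero]

theorem SuppIn.smul {S : Finset (Fin 3)} {K : B n} (hK : SuppIn S K) (r : ℝ) :
    SuppIn S (r • K) := fun s hs i => by rw [Derivation.map_smul, hK s hs i, smul_zero]

theorem SuppIn.sum {S : Finset (Fin 3)} {ι : Type*} {t : Finset ι} {f : ι → B n}
    (h : ∀ x ∈ t, SuppIn S (f x)) : SuppIn S (∑ x ∈ t, f x) := fun s hs i => by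
  rw [map_sum, Finset.sum_eq_zero fun x hx => h x hx s hs i]

theorem SuppIn.pderiv {S : Finset (Fin 3)} {K : B n} (hK : SuppIn S K) (p : Fin 3 × Fin n) :
    SuppIn S (pderiv p K) := fun s hs i => by
  rw [MW.pderiv_comm', hK s hs i, map_zero]

theorem SuppIn.dOp {S T : Finset (Fin 3)} {K : B n} (hK : SuppIn S K) (i : Fin n) :
    SuppIn S (Dop T i K) := by
  rw [Dop_apply]
  exact SuppIn.sum fun t _ => hK.pderiv _

theorem SuppIn.pOp {S : Finset (Fin 3)} {K : B n} (hK : SuppIn S K)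
    (π : Fin n → Fin n → ℝ) (T T' : Finset (Fin 3)) : SuppIn S (Pop π T T' K) := by
  simp only [MW.Pop, LinearMap.sum_apply, LinearMap.smul_apply, Module.End.mul_apply]
  exact SuppIn.sum fun a _ => SuppIn.sum fun b _ => SuppIn.smul (SuppIn.dOp (SuppIn.dOp hK b) a) _

theorem SuppIn.pOp_pow {S : Finset (Fin 3)} {K : B n} (hK : SuppIn S K)
    (π : Fin n → Fin n → ℝ) (T T' : Finset (Fin 3)) (k : ℕ) :
    SuppIn S ((Pop π T T' ^ k) K) := by
  induction k with
  | zero => simpa using hK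
  | succ k ih => rw [pow_succ', Module.End.mul_apply]; exact ih.pOp π T T'

theorem SuppIn.wl {S T : Finset (Fin 3)} {K : B n} (hK : SuppIn S K) (l : List (Fin n)) :
    SuppIn S (Wl T l K) := by
  induction l with
  | nil => simpa using hK
  | cons i l ih => exact ih.dOp i

end MW
namespace MW
variable {n : ℕ}
section TEST
variable (π : Fin n → Fin n → ℝ)

theorem Dop_mul_of_suppIn {T U : Finset (Fin 3)} (hTU : Disjoint T U) {M : B n}
    (hM : SuppIn U M) (j : Fin n) (G : B n) :
    Dop T j (G * M) = Dop T j G * M := by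
  rw [Dop_apply, Dop_apply, Finset.sum_mul]
  refine Finset.sum_congr rfl fun t ht => ?_
  rw [pderiv_mul, hM t (Finset.disjoint_left.mp hTU ht) j, mul_zero, add_zero]

theorem Dop_mul_of_suppIn' {T U : Finset (Fin 3)} (hTU : Disjoint T U) {M : B n}
    (hM : SuppIn U M) (j : Fin n) (G : B n) :
    Dop T j (M * G) = M * Dop T j G := by
  rw [mul_comm, Dop_mul_of_suppIn hTU hM, mul_comm]

theorem Pop_mul_of_suppIn {S T U : Finset (Fin 3)} (hSU : Disjoint S U)
    (hTU : Disjoint T U) {M : B n} (hM : SuppIn U M) (G : B n) :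
    Pop π S T (G * M) = Pop π S T G * M := by
  simp only [MW.Pop, LinearMap.sum_apply, LinearMap.smul_apply, Module.End.mul_apply,
    Finset.sum_mul, smul_mul_assoc]
  exact Finset.sum_congr rfl fun a _ => Finset.sum_congr rfl fun b _ => by
    rw [Dop_mul_of_suppIn hTU hM, Dop_mul_of_suppIn hSU hM]

theorem Pop_pow_mul_of_suppIn {S T U : Finset (Fin 3)} (hSU : Disjoint S U)
    (hTU : Disjoint T U) {M : B n} (hM : SuppIn U M) (k : ℕ) (G : B n) :
    (Pop π S T ^ k) (G * M) = (Pop π S T ^ k) G * M := by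
  induction k with
  | zero => simp
  | succ k ih => rw [pow_succ', Module.End.mul_apply, Module.End.mul_apply, ih,
      Pop_mul_of_suppIn π hSU hTU hM]

theorem Pop_expand {S T : Finset (Fin 3)} (hST : Disjoint S T) {K L : B n}
    (hK : SuppIn S K) (hL : SuppIn T L) :
    Pop π S T (K * L) = ∑ i : Fin n, ∑ j : Fin n,
      π i j • (Dop S i K * Dop T j L) := by
  simp only [MW.Pop, LinearMap.sum_apply, LinearMap.smul_apply, Module.End.mul_apply]
  refine Finset.sum_congr rfl fun a _ => Finset.sum_congr rfl fun b _ => ?_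
  rw [Dop_mul_of_suppIn' hST.symm hK, Dop_mul_of_suppIn hST (hL.dOp b)]

theorem Pop_pow_expand {S T : Finset (Fin 3)} (hST : Disjoint S T) {K L : B n}
    (hK : SuppIn S K) (hL : SuppIn T L) (k : ℕ) :
    (Pop π S T ^ k) (K * L) = ∑ I : Fin k → Fin n, ∑ J : Fin k → Fin n,
      (∏ l : Fin k, π (I l) (J l)) • (Wl S (List.ofFn I) K * Wl T (List.ofFn J) L) := by
  induction k with
  | zero =>
    simp
  | succ k ih =>
    have hrei : ∀ G : (Fin (k+1) → Fin n) → (Fin (k+1) → Fin n) → B n,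
        (∑ I : Fin (k+1) → Fin n, ∑ J : Fin (k+1) → Fin n, G I J)
          = ∑ i : Fin n, ∑ I : Fin k → Fin n, ∑ j : Fin n, ∑ J : Fin k → Fin n,
              G (Fin.cons i I) (Fin.cons j J) := by
      intro G
      rw [← Fintype.sum_equiv (Fin.consEquiv fun _ => Fin n)
        (fun p => ∑ J : Fin (k+1) → Fin n, G (Fin.cons p.1 p.2) J) _ (fun p => rfl),
        Fintype.sum_prod_type]
      refine Finset.sum_congr rfl fun i _ => Finset.sum_congr rfl fun I _ => ?_
      rw [← Fintype.sum_equiv (Fin.consEquiv fun _ => Fin n)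
        (fun p => G (Fin.cons i I) (Fin.cons p.1 p.2)) _ (fun p => rfl),
        Fintype.sum_prod_type]
    rw [hrei]
    have hterm : ∀ (i j : Fin n) (I J : Fin k → Fin n),
        ((∏ l : Fin (k+1), π ((Fin.cons i I : Fin (k+1) → Fin n) l) ((Fin.cons j J : Fin (k+1) → Fin n) l)) •
          (Wl S (List.ofFn (Fin.cons i I : Fin (k+1) → Fin n)) K * Wl T (List.ofFn (Fin.cons j J : Fin (k+1) → Fin n)) L))
        = (π i j * ∏ l : Fin k, π (I l) (J l)) •
            (Dop S i (Wl S (List.ofFn I) K) * Dop T j (Wl T (List.ofFn J) L)) := by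
      intro i j I J
      rw [Fin.prod_univ_succ]
      simp only [Fin.cons_zero, Fin.cons_succ, List.ofFn_succ, Wl_cons]
    simp only [hterm]
    rw [pow_succ', Module.End.mul_apply, ih, map_sum]
    have step : ∀ I J : Fin k → Fin n,
        Pop π S T ((∏ l : Fin k, π (I l) (J l)) •
            (Wl S (List.ofFn I) K * Wl T (List.ofFn J) L))
          = ∑ i : Fin n, ∑ j : Fin n,
              (π i j * ∏ l : Fin k, π (I l) (J l)) •
                (Dop S i (Wl S (List.ofFn I) K) * Dop T j (Wl T (List.ofFn J) L)) := by
      intro I J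
      rw [map_smul, Pop_expand π hST (hK.wl _) (hL.wl _), Finset.smul_sum]
      refine Finset.sum_congr rfl fun i _ => ?_
      rw [Finset.smul_sum]
      refine Finset.sum_congr rfl fun j _ => ?_
      rw [smul_smul, mul_comm]
    calc ∑ I : Fin k → Fin n, Pop π S T (∑ J : Fin k → Fin n,
            (∏ l : Fin k, π (I l) (J l)) •
              (Wl S (List.ofFn I) K * Wl T (List.ofFn J) L))
        = ∑ I : Fin k → Fin n, ∑ J : Fin k → Fin n, ∑ i : Fin n, ∑ j : Fin n,
            (π i j * ∏ l : Fin k, π (I l) (J l)) •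
              (Dop S i (Wl S (List.ofFn I) K) * Dop T j (Wl T (List.ofFn J) L)) := by
          refine Finset.sum_congr rfl fun I _ => ?_
          rw [map_sum]
          exact Finset.sum_congr rfl fun J _ => step I J
      _ = ∑ I : Fin k → Fin n, ∑ i : Fin n, ∑ J : Fin k → Fin n, ∑ j : Fin n,
            (π i j * ∏ l : Fin k, π (I l) (J l)) •
              (Dop S i (Wl S (List.ofFn I) K) * Dop T j (Wl T (List.ofFn J) L)) :=
          Finset.sum_congr rfl fun I _ => Finset.sum_comm
      _ = ∑ i : Fin n, ∑ I : Fin k → Fin n, ∑ J : Fin k → Fin n, ∑ j : Fin n,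
            (π i j * ∏ l : Fin k, π (I l) (J l)) •
              (Dop S i (Wl S (List.ofFn I) K) * Dop T j (Wl T (List.ofFn J) L)) :=
          Finset.sum_comm
      _ = ∑ i : Fin n, ∑ I : Fin k → Fin n, ∑ j : Fin n, ∑ J : Fin k → Fin n,
            (π i j * ∏ l : Fin k, π (I l) (J l)) •
              (Dop S i (Wl S (List.ofFn I) K) * Dop T j (Wl T (List.ofFn J) L)) :=
          Finset.sum_congr rfl fun i _ => Finset.sum_congr rfl fun I _ => Finset.sum_comm

theorem ev_emb (s : Fin 3) (f : MvPolynomial (Fin n) ℝ) : ev (emb s f) = f := by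
  show aeval _ (rename _ f) = f
  rw [aeval_rename]
  exact aeval_X_left_apply f

theorem pderiv_ev (i : Fin n) (K : B n) :
    pderiv i (ev K) = ev (∑ s : Fin 3, pderiv (s, i) K) := by
  induction K using MvPolynomial.induction_on with
  | C a => simp [ev]
  | add p q hp hq => simp [hp, hq, Finset.sum_add_distrib]
  | mul_X p q hp =>
    obtain ⟨s, j⟩ := q
    have hX : ev (X (s, j) : B n) = (X j : MvPolynomial (Fin n) ℝ) := by simp [ev]
    classical
    have hXd : (pderiv i (X j : MvPolynomial (Fin n) ℝ))
        = ∑ x : Fin 3, ev (pderiv (x, i) (X (s, j) : B n)) := by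
      simp only [pderiv_X, Pi.single_apply, Prod.mk.injEq]
      rcases eq_or_ne j i with rfl | hj
      · simp [apply_ite (ev (n := n)), Prod.ext_iff]
      · simp [hj, Ne.symm hj]
    simp only [map_mul, hX, pderiv_mul, hp, map_sum, map_add, Finset.sum_add_distrib]
    rw [← Finset.sum_mul, ← Finset.mul_sum, ← hXd]

theorem pderiv_ev_suppIn {S : Finset (Fin 3)} {K : B n} (hK : SuppIn S K) (i : Fin n) :
    pderiv i (ev K) = ev (Dop S i K) := by
  rw [pderiv_ev, Dop_apply]
  congr 1
  exact (Finset.sum_subset (Finset.subset_univ S)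
    (fun s _ hs => hK s hs i)).symm

theorem ev_wl {S : Finset (Fin 3)} {K : B n} (hK : SuppIn S K) (l : List (Fin n)) :
    pdSeqP l (ev K) = ev (Wl S l K) := by
  induction l with
  | nil => rfl
  | cons i l ih =>
    show pderiv i (pdSeqP l (ev K)) = _
    rw [ih, Wl_cons, pderiv_ev_suppIn (hK.wl l) i]

theorem moyal_ev {S T : Finset (Fin 3)} (hST : Disjoint S T) {K L : B n}
    (hK : SuppIn S K) (hL : SuppIn T L) (k : ℕ) :
    moyalP π k (ev K) (ev L)
      = ev (((k.factorial : ℝ)⁻¹ • (Pop π S T ^ k)) (K * L)) := by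
  rw [moyalP, LinearMap.smul_apply, map_smul, Pop_pow_expand π hST hK hL, map_sum, C_mul',
    one_div]
  congr 1
  refine Finset.sum_congr rfl fun I _ => ?_
  rw [map_sum]
  refine Finset.sum_congr rfl fun J _ => ?_
  rw [map_smul, map_mul, C_mul', smul_mul_assoc, ev_wl hK, ev_wl hL]

theorem Dop_union {S T : Finset (Fin 3)} (h : Disjoint S T) (i : Fin n) :
    Dop (S ∪ T) i = Dop S i + Dop T i := Finset.sum_union h

theorem Pop_union_left {S S' T : Finset (Fin 3)} (h : Disjoint S S') :
    Pop π (S ∪ S') T = Pop π S T + Pop π S' T := by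
  simp only [MW.Pop, Dop_union h, add_mul, smul_add, Finset.sum_add_distrib]

theorem Pop_union_right {S T T' : Finset (Fin 3)} (h : Disjoint T T') :
    Pop π S (T ∪ T') = Pop π S T + Pop π S T' := by
  simp only [MW.Pop, Dop_union h, mul_add, smul_add, Finset.sum_add_distrib]

theorem sum_pow_aux {R : Type*} [Ring R] [Algebra ℝ R] (X Y : R) (hc : Commute X Y) (l : ℕ) :
    ∑ p ∈ Finset.HasAntidiagonal.antidiagonal l,
        ((p.2.factorial : ℝ)⁻¹ * (p.1.factorial : ℝ)⁻¹) • (Y ^ p.2 * X ^ p.1)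
      = ((l.factorial : ℝ)⁻¹) • (X + Y) ^ l := by
  rw [hc.add_pow', Finset.smul_sum]
  refine Finset.sum_congr rfl fun p hp => ?_
  have hl : p.1 + p.2 = l := Finset.HasAntidiagonal.mem_antidiagonal.mp hp
  rw [(hc.pow_pow p.1 p.2).eq, ← Nat.cast_smul_eq_nsmul ℝ, smul_smul]
  congr 1
  subst hl
  rw [← Nat.add_choose_mul_factorial_mul_factorial p.1 p.2]
  have h1 : (p.1.factorial : ℝ) ≠ 0 := Nat.cast_ne_zero.mpr p.1.factorial_ne_zero
  have h2 : (p.2.factorial : ℝ) ≠ 0 := Nat.cast_ne_zero.mpr p.2.factorial_ne_zero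
  have h3 : (((p.1 + p.2).choose p.1 : ℕ) : ℝ) ≠ 0 :=
    Nat.cast_ne_zero.mpr (Nat.choose_pos (Nat.le_add_right _ _)).ne'
  have h4 : (((p.1 + p.2).choose p.2 : ℕ) : ℝ) ≠ 0 :=
    Nat.cast_ne_zero.mpr (Nat.choose_pos (Nat.le_add_left _ _)).ne'
  push_cast
  rw [mul_inv, mul_inv]
  rw [Nat.choose_symm_add]
  field_simp

theorem moyalP_zero (f g : MvPolynomial (Fin n) ℝ) : moyalP π 0 f g = f * g := by
  simp [moyalP, pdSeqP]

theorem pdSeqP_one_cons (i : Fin n) (l : List (Fin n)) :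
    pdSeqP (i :: l) (1 : MvPolynomial (Fin n) ℝ) = 0 := by
  induction l generalizing i with
  | nil => exact pderiv_one
  | cons j l ih => show pderiv i (pdSeqP (j :: l) 1) = 0; rw [ih j, map_zero]

theorem moyalP_succ_one_left (k : ℕ) (f : MvPolynomial (Fin n) ℝ) :
    moyalP π (k + 1) 1 f = 0 := by
  rw [moyalP]
  rw [Finset.sum_eq_zero, mul_zero]
  intro I _
  rw [Finset.sum_eq_zero]
  intro J _
  rw [List.ofFn_succ, pdSeqP_one_cons, mul_zero, zero_mul]

theorem moyalP_succ_one_right (k : ℕ) (f : MvPolynomial (Fin n) ℝ) :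
    moyalP π (k + 1) f 1 = 0 := by
  rw [moyalP]
  rw [Finset.sum_eq_zero, mul_zero]
  intro I _
  rw [Finset.sum_eq_zero]
  intro J _
  rw [List.ofFn_succ (f := J), pdSeqP_one_cons, mul_zero]

theorem moyalP_one (f g : MvPolynomial (Fin n) ℝ) :
    moyalP π 1 f g = ∑ i : Fin n, ∑ j : Fin n,
      MvPolynomial.C (π i j) * pderiv i f * pderiv j g := by
  rw [moyalP]
  rw [Fintype.sum_equiv (Equiv.funUnique (Fin 1) (Fin n))
      (fun I : Fin 1 → Fin n => ∑ J : Fin 1 → Fin n,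
        MvPolynomial.C (∏ l : Fin 1, π (I l) (J l)) * pdSeqP (List.ofFn I) f *
          pdSeqP (List.ofFn J) g)
      (fun i : Fin n => ∑ j : Fin n,
        MvPolynomial.C (π i j) * pderiv i f * pderiv j g) ?_]
  · norm_num
  · intro I
    rw [Fintype.sum_equiv (Equiv.funUnique (Fin 1) (Fin n))
      (fun J : Fin 1 → Fin n =>
        MvPolynomial.C (∏ l : Fin 1, π (I l) (J l)) * pdSeqP (List.ofFn I) f *
          pdSeqP (List.ofFn J) g)
      (fun j : Fin n =>
        MvPolynomial.C (π (Equiv.funUnique (Fin 1) (Fin n) I) j) *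
          pderiv (Equiv.funUnique (Fin 1) (Fin n) I) f * pderiv j g) ?_]
    intro J
    simp [pdSeqP, List.ofFn_succ, Equiv.funUnique, Fin.prod_univ_one]
theorem moyal_assoc (f g h : MvPolynomial (Fin n) ℝ) (l : ℕ) :
    ∑ p ∈ Finset.HasAntidiagonal.antidiagonal l, moyalP π p.2 (moyalP π p.1 f g) h
      = ∑ p ∈ Finset.HasAntidiagonal.antidiagonal l, moyalP π p.2 f (moyalP π p.1 g h) := by
  classical
  have d01 : Disjoint ({0} : Finset (Fin 3)) {1} := by decide
  have d02 : Disjoint ({0} : Finset (Fin 3)) {2} := by decide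
  have d12 : Disjoint ({1} : Finset (Fin 3)) {2} := by decide
  have d10 : Disjoint ({1} : Finset (Fin 3)) {0} := d01.symm
  have d20 : Disjoint ({2} : Finset (Fin 3)) {0} := d02.symm
  have d01_2 : Disjoint ({0, 1} : Finset (Fin 3)) {2} := by decide
  have d0_12 : Disjoint ({0} : Finset (Fin 3)) {1, 2} := by decide
  set X := Pop (n := n) π {0} {1} with hX
  set Y := Pop (n := n) π {0} {2} with hY
  set Z := Pop (n := n) π {1} {2} with hZ
  set F : B n := emb 0 f * emb 1 g * emb 2 h with hF
  have hPopL : Pop (n := n) π {0, 1} {2} = Y + Z := by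
    rw [show ({0, 1} : Finset (Fin 3)) = {0} ∪ {1} by decide, Pop_union_left π d01]
  have hPopR : Pop (n := n) π {0} {1, 2} = X + Y := by
    rw [show ({1, 2} : Finset (Fin 3)) = {1} ∪ {2} by decide, Pop_union_right π d12]
  have hcXY : Commute X Y := commute_Pop π _ _ _ _
  have hcXZ : Commute X Z := commute_Pop π _ _ _ _
  have hcYZ : Commute Y Z := commute_Pop π _ _ _ _
  have hL : ∀ p : ℕ × ℕ, moyalP π p.2 (moyalP π p.1 f g) h
      = ev ((((p.2.factorial : ℝ)⁻¹ * (p.1.factorial : ℝ)⁻¹) • ((Y + Z) ^ p.2 * X ^ p.1)) F) := by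
    intro p
    have hfg : moyalP π p.1 f g
        = ev (((p.1.factorial : ℝ)⁻¹ • (X ^ p.1)) (emb 0 f * emb 1 g)) := by
      conv_lhs => rw [← ev_emb 0 f, ← ev_emb 1 g]
      exact moyal_ev π d01 (suppIn_emb 0 f) (suppIn_emb 1 g) p.1
    have hsupp : SuppIn {0, 1} (((p.1.factorial : ℝ)⁻¹ • (X ^ p.1)) (emb 0 f * emb 1 g)) := by
      rw [LinearMap.smul_apply]
      refine SuppIn.smul ?_ _
      refine SuppIn.pOp_pow ?_ π _ _ _
      exact (((suppIn_emb 0 f).mul (suppIn_emb 1 g)).mono (by decide))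
    rw [hfg]
    conv_lhs => rw [show h = ev (emb 2 h) from (ev_emb 2 h).symm]
    rw [moyal_ev π d01_2 hsupp (suppIn_emb 2 h) p.2]
    congr 1
    rw [LinearMap.smul_apply, LinearMap.smul_apply, LinearMap.smul_apply, smul_mul_assoc]
    have pull1 : (X ^ p.1) (emb 0 f * emb 1 g) * emb 2 h = (X ^ p.1) F :=
      (Pop_pow_mul_of_suppIn π d02 d12 (suppIn_emb 2 h) p.1 (emb 0 f * emb 1 g)).symm
    rw [pull1, map_smul, smul_smul, hPopL, Module.End.mul_apply]
  have hR : ∀ p : ℕ × ℕ, moyalP π p.2 f (moyalP π p.1 g h)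
      = ev ((((p.2.factorial : ℝ)⁻¹ * (p.1.factorial : ℝ)⁻¹) • ((X + Y) ^ p.2 * Z ^ p.1)) F) := by
    intro p
    have hgh : moyalP π p.1 g h
        = ev (((p.1.factorial : ℝ)⁻¹ • (Z ^ p.1)) (emb 1 g * emb 2 h)) := by
      conv_lhs => rw [← ev_emb 1 g, ← ev_emb 2 h]
      exact moyal_ev π d12 (suppIn_emb 1 g) (suppIn_emb 2 h) p.1
    have hsupp : SuppIn {1, 2} (((p.1.factorial : ℝ)⁻¹ • (Z ^ p.1)) (emb 1 g * emb 2 h)) := by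
      rw [LinearMap.smul_apply]
      refine SuppIn.smul ?_ _
      refine SuppIn.pOp_pow ?_ π _ _ _
      exact (((suppIn_emb 1 g).mul (suppIn_emb 2 h)).mono (by decide))
    rw [hgh]
    conv_lhs => rw [show f = ev (emb 0 f) from (ev_emb 0 f).symm]
    rw [moyal_ev π d0_12 (suppIn_emb 0 f) hsupp p.2]
    congr 1
    rw [LinearMap.smul_apply, LinearMap.smul_apply, LinearMap.smul_apply, mul_smul_comm]
    have hpull : emb 0 f * (Z ^ p.1) (emb 1 g * emb 2 h) = (Z ^ p.1) F := by
      have h2 := Pop_pow_mul_of_suppIn (U := {0}) π d10 d20 (suppIn_emb 0 f) p.1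
        (emb 1 g * emb 2 h)
      rw [mul_comm (emb 0 f) _, ← h2]
      congr 1
      ring
    rw [hpull, map_smul, smul_smul, hPopR, Module.End.mul_apply]
  calc ∑ p ∈ Finset.HasAntidiagonal.antidiagonal l, moyalP π p.2 (moyalP π p.1 f g) h
      = ev ((∑ p ∈ Finset.HasAntidiagonal.antidiagonal l,
          (((p.2.factorial : ℝ)⁻¹ * (p.1.factorial : ℝ)⁻¹) • ((Y + Z) ^ p.2 * X ^ p.1))) F) := by
        rw [LinearMap.sum_apply, map_sum]
        exact Finset.sum_congr rfl fun p _ => hL p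
    _ = ev ((((l.factorial : ℝ)⁻¹) • (X + (Y + Z)) ^ l) F) := by
        rw [sum_pow_aux X (Y + Z) (hcXY.add_right hcXZ) l]
    _ = ev ((((l.factorial : ℝ)⁻¹) • (Z + (X + Y)) ^ l) F) := by
        rw [show X + (Y + Z) = Z + (X + Y) by abel]
    _ = ev ((∑ p ∈ Finset.HasAntidiagonal.antidiagonal l,
          (((p.2.factorial : ℝ)⁻¹ * (p.1.factorial : ℝ)⁻¹) • ((X + Y) ^ p.2 * Z ^ p.1))) F) := by
        rw [sum_pow_aux Z (X + Y) ((hcXZ.symm).add_right (hcYZ.symm)) l]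
    _ = ∑ p ∈ Finset.HasAntidiagonal.antidiagonal l, moyalP π p.2 f (moyalP π p.1 g h) := by
        rw [LinearMap.sum_apply, map_sum]
        exact (Finset.sum_congr rfl fun p _ => hR p).symm

end TEST
end MW

/-- On `ℝ[x_1,…,x_n]` the Moyal–Weyl star product associated with a constant
antisymmetric matrix `π` is a formal star product:
(i) it is associative (stated coefficientwise in `t`, with the star product
extended `t`-linearly, so the `t^l`-coefficient of `(f⋆g)⋆h` is
`Σ_{a+b=l} m_b(m_a(f,g),h)`);
(ii) `m_0(f,g) = f·g`;
(iii) `1 ⋆ f = f = f ⋆ 1`;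
(iv) the `t`-coefficient of `f ⋆ g − g ⋆ f` is `2 Σ_{i,j} π^{ij} ∂_i f ∂_j g`. -/
theorem moyalP_formal_star_product {n : ℕ} (π : Fin n → Fin n → ℝ)
    (hanti : ∀ i j, π i j = - π j i) :
    (∀ f g h : MvPolynomial (Fin n) ℝ, ∀ l : ℕ,
        ∑ p ∈ Finset.HasAntidiagonal.antidiagonal l, moyalP π p.2 (moyalP π p.1 f g) h
      = ∑ p ∈ Finset.HasAntidiagonal.antidiagonal l, moyalP π p.2 f (moyalP π p.1 g h)) ∧
    (∀ f g : MvPolynomial (Fin n) ℝ, moyalP π 0 f g = f * g) ∧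
    (∀ f : MvPolynomial (Fin n) ℝ,
        starP π 1 f = PowerSeries.C (R := MvPolynomial (Fin n) ℝ) f ∧
        starP π f 1 = PowerSeries.C (R := MvPolynomial (Fin n) ℝ) f) ∧
    (∀ f g : MvPolynomial (Fin n) ℝ,
        moyalP π 1 f g - moyalP π 1 g f
      = MvPolynomial.C 2 * ∑ i : Fin n, ∑ j : Fin n,
          MvPolynomial.C (π i j) * MvPolynomial.pderiv i f * MvPolynomial.pderiv j g) := by
  refine ⟨fun f g h l => MW.moyal_assoc π f g h l, fun f g => MW.moyalP_zero π f g,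
    fun f => ?_, fun f g => ?_⟩
  · constructor <;>
    · ext k
      rw [starP, PowerSeries.coeff_mk]
      cases k with
      | zero => simp [MW.moyalP_zero]
      | succ k => simp [MW.moyalP_succ_one_left, MW.moyalP_succ_one_right]
  · rw [show (MvPolynomial.C 2 : MvPolynomial (Fin n) ℝ) = 2 from map_ofNat _ 2,
      MW.moyalP_one, MW.moyalP_one,
      Finset.sum_comm (f := fun i j => MvPolynomial.C (π i j) * pderiv i g * pderiv j f),
      ← Finset.sum_sub_distrib, Finset.mul_sum]
    refine Finset.sum_congr rfl fun i _ => ?_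
    rw [← Finset.sum_sub_distrib, Finset.mul_sum]
    refine Finset.sum_congr rfl fun j _ => ?_
    rw [hanti j i, map_neg]
    ring
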